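/- Let S, T > 0 and 0 < ε₀ < min(S,T). Let ρ, a : [0,S] → ℝ be continuous, with ρ C¹ on (0,S), a C¹ on (0,S), ρ(0) = 0, ρ(s) > 0 for s ∈ (0,S], and a(s) > 0 for s ∈ (0,S]. Let w : [0,S] × (0,T] → ℝ be continuous and bounded, such that ∂ₛw and ∂ₜw exist, are continuous and bounded on [0,S] × (0,T], w is twice continuously differentiable in s on (0,S) × (0,T], and ρ(s)·∂ₜw(s,t) = (ρ·a)'(s)·∂ₛw(s,t) + ρ(s)·a(s)·∂ₛ²w(s,t) for all (s,t) ∈ (0,S) × (0,T]. Assume: (i) w(s,t) ≤ 0 for all (s,t) ∈ [0,ε₀] × (0,ε₀]; (ii) w(S,t) ≤ 0 for all t ∈ (0,T]; (iii) w(s,t) → 0 as t → 0⁺, uniformly for s ∈ [ε₀,S]. Then w(s,t) ≤ 0 for all (s,t) ∈ [0,S] × (0,T]. -/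

import Mathlib

open Set Filter
open Topology

lemma stmt15_aux_slope {f : ℝ → ℝ} {T τ t₀ δ : ℝ} (hτ : 0 < τ) (hτt : τ < t₀) (ht₀ : t₀ ≤ T)
    (hdiff : DifferentiableWithinAt ℝ f (Set.Ioc 0 T) t₀)
    (hmax : ∀ t ∈ Set.Icc τ T, f t - δ * t ≤ f t₀ - δ * t₀) :
    δ ≤ derivWithin f (Set.Ioc 0 T) t₀ := by
  have hd := hdiff.hasDerivWithinAt
  rw [hasDerivWithinAt_iff_tendsto_slope] at hd
  have hsub : Set.Ioo τ t₀ ⊆ Set.Ioc 0 T \ {t₀} := by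
    intro t ht
    exact ⟨⟨hτ.trans ht.1, ht.2.le.trans ht₀⟩, ne_of_lt ht.2⟩
  have hd' : Tendsto (slope f t₀) (𝓝[Set.Ioo τ t₀] t₀)
      (𝓝 (derivWithin f (Set.Ioc 0 T) t₀)) :=
    hd.mono_left (nhdsWithin_mono _ hsub)
  rw [nhdsWithin_Ioo_eq_nhdsLT hτt] at hd'
  refine ge_of_tendsto hd' ?_
  filter_upwards [Ioo_mem_nhdsLT hτt] with t ht
  have h1 : f t - δ * t ≤ f t₀ - δ * t₀ := hmax t ⟨ht.1.le, ht.2.le.trans ht₀⟩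
  have h2 : t - t₀ < 0 := sub_neg.mpr ht.2
  have h3 : slope f t₀ t = (f t - f t₀) / (t - t₀) := slope_def_field f t₀ t
  rw [h3, le_div_iff_of_neg h2]
  nlinarith


/-- a weighted parabolic maximum principle on `[0, S] × (0, T]` for the
degenerate divergence-form operator `ρ ∂ₜ w = (ρ a)' ∂ₛ w + ρ a ∂ₛ² w`, where the weight
`ρ` vanishes at the left endpoint `s = 0`.  Together with nonpositivity of `w` near the
corner `[0, ε₀] × (0, ε₀]`, nonpositivity at the right boundary `s = S`, and uniform
vanishing of `w(s, t)` as `t → 0⁺` for `s ∈ [ε₀, S]`, it follows that `w ≤ 0`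
everywhere on `[0, S] × (0, T]`. -/
theorem stmt15 (S T ε₀ : ℝ) (hS : 0 < S) (hT : 0 < T)
    (hε : 0 < ε₀) (hεmin : ε₀ < min S T)
    (ρ a : ℝ → ℝ)
    (hρcont : ContinuousOn ρ (Set.Icc 0 S))
    (hacont : ContinuousOn a (Set.Icc 0 S))
    (hρC1 : ContDiffOn ℝ 1 ρ (Set.Ioo 0 S))
    (haC1 : ContDiffOn ℝ 1 a (Set.Ioo 0 S))
    (hρ0 : ρ 0 = 0)
    (hρpos : ∀ s ∈ Set.Ioc (0:ℝ) S, 0 < ρ s)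
    (hapos : ∀ s ∈ Set.Ioc (0:ℝ) S, 0 < a s)
    (w : ℝ → ℝ → ℝ)
    (hwcont : ContinuousOn (fun p : ℝ × ℝ => w p.1 p.2) (Set.Icc 0 S ×ˢ Set.Ioc 0 T))
    (hwbdd : ∃ C, ∀ s ∈ Set.Icc (0:ℝ) S, ∀ t ∈ Set.Ioc (0:ℝ) T, |w s t| ≤ C)
    -- existence of the partial derivative ∂ₛ w on `[0, S] × (0, T]`
    (hDs : ∀ s ∈ Set.Icc (0:ℝ) S, ∀ t ∈ Set.Ioc (0:ℝ) T,
      DifferentiableWithinAt ℝ (fun x => w x t) (Set.Icc 0 S) s)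
    -- continuity of ∂ₛ w on `[0, S] × (0, T]`
    (hDscont : ContinuousOn
      (fun p : ℝ × ℝ => derivWithin (fun x => w x p.2) (Set.Icc 0 S) p.1)
      (Set.Icc 0 S ×ˢ Set.Ioc 0 T))
    -- boundedness of ∂ₛ w on `[0, S] × (0, T]`
    (hDsbdd : ∃ C, ∀ s ∈ Set.Icc (0:ℝ) S, ∀ t ∈ Set.Ioc (0:ℝ) T,
      |derivWithin (fun x => w x t) (Set.Icc 0 S) s| ≤ C)
    -- existence of the partial derivative ∂ₜ w on `[0, S] × (0, T]`
    (hDt : ∀ s ∈ Set.Icc (0:ℝ) S, ∀ t ∈ Set.Ioc (0:ℝ) T,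
      DifferentiableWithinAt ℝ (fun τ => w s τ) (Set.Ioc 0 T) t)
    -- continuity of ∂ₜ w on `[0, S] × (0, T]`
    (hDtcont : ContinuousOn
      (fun p : ℝ × ℝ => derivWithin (fun τ => w p.1 τ) (Set.Ioc 0 T) p.2)
      (Set.Icc 0 S ×ˢ Set.Ioc 0 T))
    -- boundedness of ∂ₜ w on `[0, S] × (0, T]`
    (hDtbdd : ∃ C, ∀ s ∈ Set.Icc (0:ℝ) S, ∀ t ∈ Set.Ioc (0:ℝ) T,
      |derivWithin (fun τ => w s τ) (Set.Ioc 0 T) t| ≤ C)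
    -- `w` is twice continuously differentiable in `s` on `(0, S) × (0, T]`
    (hC2 : ∀ t ∈ Set.Ioc (0:ℝ) T, ContDiffOn ℝ 2 (fun x => w x t) (Set.Ioo 0 S))
    -- the degenerate parabolic equation `ρ ∂ₜ w = (ρ a)' ∂ₛ w + ρ a ∂ₛ² w`
    (hpde : ∀ s ∈ Set.Ioo (0:ℝ) S, ∀ t ∈ Set.Ioc (0:ℝ) T,
      ρ s * derivWithin (fun τ => w s τ) (Set.Ioc 0 T) t
        = deriv (fun x => ρ x * a x) s * deriv (fun x => w x t) s
          + ρ s * a s * deriv (deriv (fun x => w x t)) s)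
    -- (i): `w ≤ 0` on the corner `[0, ε₀] × (0, ε₀]`
    (hcorner : ∀ s ∈ Set.Icc (0:ℝ) ε₀, ∀ t ∈ Set.Ioc (0:ℝ) ε₀, w s t ≤ 0)
    -- (ii): `w ≤ 0` on the outer boundary `s = S`
    (houter : ∀ t ∈ Set.Ioc (0:ℝ) T, w S t ≤ 0)
    -- (iii): `w(s, t) → 0` as `t → 0⁺`, uniformly for `s ∈ [ε₀, S]`
    (hinit : TendstoUniformlyOn (fun t s => w s t) 0
      (nhdsWithin 0 (Set.Ioi 0)) (Set.Icc ε₀ S)) :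
    ∀ s ∈ Set.Icc (0:ℝ) S, ∀ t ∈ Set.Ioc (0:ℝ) T, w s t ≤ 0 := by
  intro s₁ hs₁ t₁ ht₁
  obtain ⟨C, hC⟩ := hDsbdd
  refine le_of_forall_pos_le_add ?_
  intro ε hεpos
  set δ : ℝ := ε / (2 * T) with hδdef
  set η : ℝ := ε / 2 with hηdef
  have hδpos : 0 < δ := by rw [hδdef]; positivity
  have hηpos : 0 < η := by rw [hηdef]; positivity
  -- choose τ
  have h1 := Metric.tendstoUniformlyOn_iff.mp hinit η hηpos
  have h2 : ∀ᶠ t in 𝓝[>] (0:ℝ), t ∈ Set.Ioo (0:ℝ) (min ε₀ t₁) :=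
    eventually_of_mem (Ioo_mem_nhdsGT (lt_min hε ht₁.1)) fun x hx => hx
  obtain ⟨τ, hτw', hτmem⟩ := (h1.and h2).exists
  have hτ0 : 0 < τ := hτmem.1
  have hτε : τ < ε₀ := hτmem.2.trans_le (min_le_left _ _)
  have hτt₁ : τ < t₁ := hτmem.2.trans_le (min_le_right _ _)
  have hτT : τ ≤ T := (hτt₁.trans_le ht₁.2).le
  have hτw : ∀ s ∈ Set.Icc ε₀ S, |w s τ| < η := by
    intro s hs
    have := hτw' s hs
    rw [Real.dist_eq] at this
    simpa using this
  -- maximum of the perturbed function on the compact rectangle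
  have hQc : IsCompact (Set.Icc (0:ℝ) S ×ˢ Set.Icc τ T) := isCompact_Icc.prod isCompact_Icc
  have hQsub : Set.Icc (0:ℝ) S ×ˢ Set.Icc τ T ⊆ Set.Icc (0:ℝ) S ×ˢ Set.Ioc 0 T := by
    intro p hp; exact ⟨hp.1, ⟨hτ0.trans_le hp.2.1, hp.2.2⟩⟩
  have hvcont : ContinuousOn (fun p : ℝ × ℝ => w p.1 p.2 - η - δ * (p.2 - τ))
      (Set.Icc (0:ℝ) S ×ˢ Set.Icc τ T) :=
    ((hwcont.mono hQsub).sub continuousOn_const).sub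
      ((continuous_const.mul (continuous_snd.sub continuous_const)).continuousOn)
  obtain ⟨⟨s₀, t₀⟩, hp₀Q, hp₀max⟩ :=
    hQc.exists_isMaxOn ⟨(0, τ), ⟨⟨le_refl 0, hS.le⟩, ⟨le_refl τ, hτT⟩⟩⟩ hvcont
  obtain ⟨hs₀', ht₀'⟩ := hp₀Q
  have hs₀ : s₀ ∈ Set.Icc (0:ℝ) S := hs₀'
  have ht₀ : t₀ ∈ Set.Icc τ T := ht₀'
  have hmax' : ∀ s ∈ Set.Icc (0:ℝ) S, ∀ t ∈ Set.Icc τ T,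
      w s t - η - δ * (t - τ) ≤ w s₀ t₀ - η - δ * (t₀ - τ) :=
    fun s hs t ht => isMaxOn_iff.mp hp₀max (s, t) ⟨hs, ht⟩
  rcases le_or_gt (w s₀ t₀ - η - δ * (t₀ - τ)) 0 with hM | hM
  · -- the maximum is nonpositive: conclude
    have h3 := hmax' s₁ hs₁ t₁ ⟨hτt₁.le, ht₁.2⟩
    have h4 : δ * (t₁ - τ) ≤ δ * T :=
      mul_le_mul_of_nonneg_left (by linarith [ht₁.2]) hδpos.le
    have h5 : δ * T = ε / 2 := by rw [hδdef]; field_simp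
    have h6 : η = ε / 2 := hηdef
    linarith
  · exfalso
    -- the max time is not the initial time
    have ht₀τ : τ < t₀ := by
      rcases eq_or_lt_of_le ht₀.1 with h | h
      · exfalso
        have he : δ * (t₀ - τ) = 0 := by rw [← h]; ring
        rcases le_total s₀ ε₀ with hsε | hsε
        · have hcc := hcorner s₀ ⟨hs₀.1, hsε⟩ τ ⟨hτ0, hτε.le⟩
          rw [← h] at hM
          linarith [he]
        · have hic := hτw s₀ ⟨hsε, hs₀.2⟩
          have := (abs_lt.mp hic).2
          rw [← h] at hM
          linarith [he]
      · exact h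
    have ht₀0 : 0 < t₀ := hτ0.trans ht₀τ
    have ht₀mem : t₀ ∈ Set.Ioc (0:ℝ) T := ⟨ht₀0, ht₀.2⟩
    -- the max point is not the outer boundary
    have hs₀S : s₀ < S := by
      rcases lt_or_eq_of_le hs₀.2 with h | h
      · exact h
      · exfalso
        have hob := houter t₀ ht₀mem
        rw [h] at hM
        have hδτ : 0 ≤ δ * (t₀ - τ) := mul_nonneg hδpos.le (by linarith)
        linarith
    -- the time derivative at the max point is at least δ
    have hdtw₀ : δ ≤ derivWithin (fun τ' => w s₀ τ') (Set.Ioc 0 T) t₀ := by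
      refine stmt15_aux_slope hτ0 ht₀τ ht₀.2 (hDt s₀ hs₀ t₀ ht₀mem) ?_
      intro t ht
      have := hmax' s₀ hs₀ t ht
      have e1 : δ * (t - τ) = δ * t - δ * τ := by ring
      have e2 : δ * (t₀ - τ) = δ * t₀ - δ * τ := by ring
      linarith
    -- the time derivative stays above δ/2 on a small s-interval [s₀, σ₁]
    have hcont1 : ContinuousOn (fun s => derivWithin (fun τ' => w s τ') (Set.Ioc 0 T) t₀)
        (Set.Icc 0 S) :=
      hDtcont.comp (Continuous.continuousOn (continuous_id.prodMk continuous_const))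
        (fun s hs => Set.mk_mem_prod hs ht₀mem)
    have hev : ∀ᶠ s in 𝓝[Set.Icc (0:ℝ) S] s₀,
        δ / 2 < derivWithin (fun τ' => w s τ') (Set.Ioc 0 T) t₀ :=
      (hcont1 s₀ hs₀).eventually (eventually_gt_nhds (by linarith))
    obtain ⟨r, hr, hball⟩ := Metric.mem_nhdsWithin_iff.mp hev
    set σ₁ : ℝ := min (s₀ + r / 2) ((s₀ + S) / 2) with hσdef
    have hσs₀ : s₀ < σ₁ := lt_min (by linarith) (by linarith)
    have hσS : σ₁ < S := (min_le_right _ _).trans_lt (by linarith)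
    have hσd : ∀ s ∈ Set.Icc s₀ σ₁,
        δ / 2 < derivWithin (fun τ' => w s τ') (Set.Ioc 0 T) t₀ := by
      intro s hs
      have hb : s ∈ Metric.ball s₀ r := by
        rw [Metric.mem_ball, Real.dist_eq, abs_lt]
        have h6 := hs.2
        have h7 : σ₁ ≤ s₀ + r / 2 := min_le_left _ _
        constructor <;> [linarith [hs.1]; linarith]
      exact hball ⟨hb, ⟨hs₀.1.trans hs.1, hs.2.trans (by linarith [hσS])⟩⟩
    -- derivative of the flux F = ρ a ∂ₛ w
    have hFd : ∀ s ∈ Set.Ioo (0:ℝ) S,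
        HasDerivAt (fun x => ρ x * a x * deriv (fun y => w y t₀) x)
          (ρ s * derivWithin (fun τ' => w s τ') (Set.Ioc 0 T) t₀) s := by
      intro s hs
      have hρd : DifferentiableAt ℝ ρ s :=
        (hρC1.differentiableOn one_ne_zero).differentiableAt (isOpen_Ioo.mem_nhds hs)
      have had : DifferentiableAt ℝ a s :=
        (haC1.differentiableOn one_ne_zero).differentiableAt (isOpen_Ioo.mem_nhds hs)
      have hfd : DifferentiableAt ℝ (deriv (fun y => w y t₀)) s :=
        (((hC2 t₀ ht₀mem).deriv_of_isOpen (m := 1) isOpen_Ioo (by norm_num)).differentiableOn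
          one_ne_zero).differentiableAt (isOpen_Ioo.mem_nhds hs)
      have hmul := ((hρd.mul had).hasDerivAt.mul hfd.hasDerivAt)
      rw [hpde s hs t₀ ht₀mem]
      exact hmul
    -- the flux tends to 0 from the right of s₀
    have hFlim : Tendsto (fun x => ρ x * a x * deriv (fun y => w y t₀) x) (𝓝[>] s₀) (𝓝 0) := by
      rcases eq_or_lt_of_le hs₀.1 with h0 | h0
      · rw [← h0]
        have hbd : ∀ᶠ x in 𝓝[>] (0:ℝ),
            ‖ρ x * a x * deriv (fun y => w y t₀) x‖ ≤ ρ x * a x * C := by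
          filter_upwards [Ioo_mem_nhdsGT hS] with x hx
          have hxI : x ∈ Set.Ioc (0:ℝ) S := ⟨hx.1, hx.2.le⟩
          have e : deriv (fun y => w y t₀) x = derivWithin (fun y => w y t₀) (Set.Icc 0 S) x :=
            (derivWithin_of_mem_nhds (Icc_mem_nhds hx.1 hx.2)).symm
          rw [Real.norm_eq_abs, abs_mul, abs_mul, abs_of_pos (hρpos x hxI),
            abs_of_pos (hapos x hxI), e]
          exact mul_le_mul_of_nonneg_left (hC x ⟨hx.1.le, hx.2.le⟩ t₀ ht₀mem)
            (mul_pos (hρpos x hxI) (hapos x hxI)).le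
        have hρt : Tendsto ρ (𝓝[>] (0:ℝ)) (𝓝 0) := by
          have h8 : Tendsto ρ (𝓝[Set.Ioo (0:ℝ) S] 0) (𝓝 (ρ 0)) :=
            (hρcont 0 ⟨le_refl 0, hS.le⟩).mono_left (nhdsWithin_mono _ Set.Ioo_subset_Icc_self)
          rw [nhdsWithin_Ioo_eq_nhdsGT hS, hρ0] at h8
          exact h8
        have hat : Tendsto a (𝓝[>] (0:ℝ)) (𝓝 (a 0)) := by
          have h8 : Tendsto a (𝓝[Set.Ioo (0:ℝ) S] 0) (𝓝 (a 0)) :=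
            (hacont 0 ⟨le_refl 0, hS.le⟩).mono_left (nhdsWithin_mono _ Set.Ioo_subset_Icc_self)
          rwa [nhdsWithin_Ioo_eq_nhdsGT hS] at h8
        have hg : Tendsto (fun x => ρ x * a x * C) (𝓝[>] (0:ℝ)) (𝓝 0) := by
          have := (hρt.mul hat).mul (tendsto_const_nhds (x := C))
          simpa using this
        exact squeeze_zero_norm' hbd hg
      · have hFc := (hFd s₀ ⟨h0, hs₀S⟩).continuousAt
        have hloc : IsLocalMax (fun y => w y t₀) s₀ := by
          filter_upwards [Icc_mem_nhds h0 hs₀S] with x hx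
          show w x t₀ ≤ w s₀ t₀
          have := hmax' x hx t₀ ht₀
          linarith
        have hf0 : deriv (fun y => w y t₀) s₀ = 0 := hloc.deriv_eq_zero
        have := hFc.tendsto.mono_left (nhdsWithin_le_nhds (s := Set.Ioi s₀))
        simpa [hf0] using this
    -- positivity of the flux on (s₀, σ₁]
    have hFmono : StrictMonoOn (fun x => ρ x * a x * deriv (fun y => w y t₀) x)
        (Set.Ioc s₀ σ₁) := by
      refine strictMonoOn_of_deriv_pos (convex_Ioc s₀ σ₁) ?_ ?_
      · intro s hs
        exact ((hFd s ⟨hs₀.1.trans_lt hs.1, hs.2.trans_lt hσS⟩).continuousAt).continuousWithinAt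
      · intro s hs
        rw [interior_Ioc] at hs
        have hIoo : s ∈ Set.Ioo (0:ℝ) S := ⟨hs₀.1.trans_lt hs.1, hs.2.trans hσS⟩
        rw [(hFd s hIoo).deriv]
        exact mul_pos (hρpos s ⟨hIoo.1, hIoo.2.le⟩)
          ((by positivity : (0:ℝ) < δ / 2).trans (hσd s ⟨hs.1.le, hs.2.le⟩))
    have hFpos : ∀ s ∈ Set.Ioc s₀ σ₁, 0 < ρ s * a s * deriv (fun y => w y t₀) s := by
      intro s hs
      have hm : (s₀ + s) / 2 ∈ Set.Ioc s₀ σ₁ :=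
        ⟨by linarith [hs.1], by linarith [hs.1, hs.2]⟩
      have h0m : (0:ℝ) ≤ ρ ((s₀ + s) / 2) * a ((s₀ + s) / 2)
          * deriv (fun y => w y t₀) ((s₀ + s) / 2) := by
        refine le_of_tendsto hFlim ?_
        filter_upwards [Ioo_mem_nhdsGT (show s₀ < (s₀ + s) / 2 by linarith [hs.1])]
          with x hx
        exact (hFmono ⟨hx.1, hx.2.le.trans hm.2⟩ hm hx.2).le
      exact lt_of_le_of_lt h0m (hFmono hm hs (by linarith [hs.1]))
    -- positivity of ∂ₛ w on (s₀, σ₁)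
    have hwpos : ∀ s ∈ Set.Ioo s₀ σ₁, 0 < deriv (fun y => w y t₀) s := by
      intro s hs
      have h1' := hFpos s ⟨hs.1, hs.2.le⟩
      have hsI : s ∈ Set.Ioc (0:ℝ) S := ⟨hs₀.1.trans_lt hs.1, (hs.2.trans hσS).le⟩
      have h2' : 0 < ρ s * a s := mul_pos (hρpos s hsI) (hapos s hsI)
      by_contra hcon
      push_neg at hcon
      nlinarith
    -- strict monotonicity of w(·, t₀) on [s₀, σ₁] contradicts maximality
    have hwc : ContinuousOn (fun y => w y t₀) (Set.Icc (0:ℝ) S) :=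
      hwcont.comp (Continuous.continuousOn (continuous_id.prodMk continuous_const))
        (fun s hs => Set.mk_mem_prod hs ht₀mem)
    have hmono : StrictMonoOn (fun y => w y t₀) (Set.Icc s₀ σ₁) := by
      refine strictMonoOn_of_deriv_pos (convex_Icc s₀ σ₁)
        (hwc.mono (Set.Icc_subset_Icc hs₀.1 hσS.le)) ?_
      intro s hs
      rw [interior_Icc] at hs
      exact hwpos s hs
    have hlt : w s₀ t₀ < w σ₁ t₀ :=
      hmono ⟨le_refl s₀, hσs₀.le⟩ ⟨hσs₀.le, le_refl σ₁⟩ hσs₀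
    have hfin := hmax' σ₁ ⟨hs₀.1.trans hσs₀.le, hσS.le⟩ t₀ ht₀
    linarith
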